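/- Let C₁ ⊆ ℕ be weakly sublacunary (i.e., its increasing enumeration (m_k) satisfies m_{k+1}/m_k ≤ λ for some λ > 1 and all sufficiently large k), let C₂ ⊆ ℕ be infinite, and let α ∈ ℝ be irrational. Then Σ_{n ∈ C₁·C₂} ‖nα‖ = ∞, where ‖x‖ denotes the distance from x to the nearest integer. (More precisely: there exist infinitely many n ∈ C₁·C₂ with ‖nα‖ > 1/(4λ).) -/

import Mathlib

set_option maxHeartbeats 1000000


/-- Distance from a real number to the nearest integer. -/
noncomputable def intDist (x : ℝ) : ℝ := |x - round x|

lemma intDist_le (x : ℝ) (z : ℤ) : intDist x ≤ |x - z| := round_le x z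

lemma intDist_add_int (x : ℝ) (z : ℤ) : intDist (x + z) = intDist x := by
  unfold intDist
  rw [round_add_intCast]
  congr 1
  push_cast
  ring

lemma intDist_sub_le (x y : ℝ) : intDist (x - y) ≤ intDist x + intDist y := by
  refine (intDist_le (x - y) (round x - round y)).trans ?_
  have h : x - y - ((round x - round y : ℤ) : ℝ) = (x - round x) - (y - round y) := by
    push_cast; ring
  rw [h]
  exact abs_sub _ _

/-- If `C₁` is weakly sublacunary (ratios of consecutive elements eventually bounded by
`λ > 1`) and `C₂` is infinite, then for every irrational `α` there are infinitely many
`n ∈ C₁·C₂` with `‖nα‖ > 1/(4λ)`; in particular `∑_{n ∈ C₁·C₂} ‖nα‖ = ∞`. -/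
theorem stmt2 (C₁ C₂ : Set ℕ) (hC₁0 : 0 ∉ C₁) (hC₁ : C₁.Infinite) (hC₂ : C₂.Infinite)
    (lam : ℝ) (hlam : 1 < lam)
    (hsub : ∀ᶠ k in Filter.atTop,
      (Nat.nth (· ∈ C₁) (k + 1) : ℝ) ≤ lam * Nat.nth (· ∈ C₁) k)
    (α : ℝ) (hα : Irrational α) :
    {n : ℕ | (∃ m₁ ∈ C₁, ∃ m₂ ∈ C₂, n = m₁ * m₂) ∧
      1 / (4 * lam) < intDist ((n : ℝ) * α)}.Infinite := by
  classical
  set S : Set ℕ := {n : ℕ | (∃ m₁ ∈ C₁, ∃ m₂ ∈ C₂, n = m₁ * m₂) ∧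
      1 / (4 * lam) < intDist ((n : ℝ) * α)} with hS
  obtain ⟨K, hK⟩ := Filter.eventually_atTop.mp hsub
  set m : ℕ → ℕ := Nat.nth (· ∈ C₁) with hm
  have hC₁' : {x | x ∈ C₁}.Infinite := hC₁
  have hmem : ∀ k, m k ∈ C₁ := fun k => Nat.nth_mem_of_infinite hC₁' k
  have hmono : StrictMono m := Nat.nth_strictMono hC₁'
  have hpos : ∀ k, 1 ≤ m k := by
    intro k
    rcases Nat.eq_zero_or_pos (m k) with h | h
    · exact absurd (h ▸ hmem k) hC₁0
    · exact h
  have hlam0 : (0:ℝ) < lam := lt_trans one_pos hlam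
  -- the window lemma: every interval (x/λ, x] with x ≥ m K meets C₁
  have window : ∀ x : ℝ, (m K : ℝ) ≤ x →
      ∃ m₁ : ℕ, m₁ ∈ C₁ ∧ (m₁ : ℝ) ≤ x ∧ x < lam * m₁ := by
    intro x hx
    have hx0 : (0:ℝ) ≤ x := le_trans (by positivity) hx
    set B : ℕ := ⌊x⌋₊ with hB
    have hKB : K ≤ B := by
      have h1 : (K : ℕ) ≤ m K := hmono.le_apply
      have h2 : ((m K : ℕ) : ℝ) ≤ x := hx
      exact Nat.le_floor (le_trans (by exact_mod_cast h1) h2)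
    set P : ℕ → Prop := fun k => (m k : ℝ) ≤ x with hP
    set k := Nat.findGreatest P B with hkdef
    have hkK : K ≤ k := Nat.le_findGreatest hKB hx
    have hk : P k := Nat.findGreatest_spec hKB hx
    have hnext : ¬ P (k + 1) := by
      by_cases hcase : k + 1 ≤ B
      · exact Nat.findGreatest_is_greatest (Nat.lt_succ_self _) hcase
      · intro hPk1
        have hk1B : B < k + 1 := not_le.mp hcase
        have h1 : k + 1 ≤ m (k+1) := hmono.le_apply
        have h2 : (m (k+1) : ℝ) ≤ x := hPk1
        have : m (k+1) ≤ B := Nat.le_floor h2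
        omega
    have hxlt : x < (m (k+1) : ℝ) := not_le.mp hnext
    refine ⟨m k, hmem k, hk, lt_of_lt_of_le hxlt (hK k hkK)⟩
  -- main step: for every M there is a good n > M
  have key : ∀ M : ℕ, ∃ n ∈ S, M < n := by
    intro M
    set R : ℕ := 2 * m K with hR
    have hR0 : 0 < R := by have := hpos K; omega
    have hR0' : (0:ℝ) < (R:ℝ) := by exact_mod_cast hR0
    -- infinitely many elements of C₂ above M
    have hC₂' : (C₂ \ Set.Iic M).Infinite := hC₂.diff (Set.finite_Iic M)
    -- pigeonhole on fractional parts
    set f : ℕ → ℕ := fun a => ⌊Int.fract ((a:ℝ) * α) * R⌋₊ with hf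
    have hmaps : Set.MapsTo f (C₂ \ Set.Iic M) (Set.Iio R) := by
      intro a _
      have h1 : Int.fract ((a:ℝ) * α) * R < 1 * R :=
        mul_lt_mul_of_pos_right (Int.fract_lt_one _) hR0'
      have h2 : Int.fract ((a:ℝ) * α) * R < (R:ℝ) := by linarith
      exact Nat.floor_lt (mul_nonneg (Int.fract_nonneg _) hR0'.le) |>.mpr h2
    obtain ⟨a, ha, b, hb, hne, hfeq⟩ :=
      hC₂'.exists_ne_map_eq_of_mapsTo hmaps (Set.finite_Iio R)
    -- the two fractional parts are 1/R-close
    have hclose : ∀ u v : ℕ, f u = f v →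
        |Int.fract ((u:ℝ) * α) - Int.fract ((v:ℝ) * α)| < 1 / R := by
      intro u v huv
      set fu := Int.fract ((u:ℝ) * α)
      set fv := Int.fract ((v:ℝ) * α)
      have hu0 : (0:ℝ) ≤ fu * R := mul_nonneg (Int.fract_nonneg _) hR0'.le
      have hv0 : (0:ℝ) ≤ fv * R := mul_nonneg (Int.fract_nonneg _) hR0'.le
      have h1 : (f u : ℝ) ≤ fu * R := Nat.floor_le hu0
      have h2 : fu * R < f u + 1 := Nat.lt_floor_add_one _
      have h3 : (f v : ℝ) ≤ fv * R := Nat.floor_le hv0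
      have h4 : fv * R < f v + 1 := Nat.lt_floor_add_one _
      rw [lt_div_iff₀ hR0']
      have habs : |fu * (R:ℝ) - fv * R| = |fu - fv| * R := by
        rw [← sub_mul, abs_mul, abs_of_pos hR0']
      rw [← habs]
      rw [huv] at h1 h2
      rw [abs_lt]
      constructor <;> linarith
    -- symmetric main argument, for ordered pairs
    have main : ∀ u v : ℕ, u ∈ C₂ → v ∈ C₂ → M < u → u < v →
        |Int.fract ((v:ℝ) * α) - Int.fract ((u:ℝ) * α)| < 1 / R →
        ∃ n ∈ S, M < n := by
      intro u v huC hvC hMu huv hcl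
      set d : ℕ := v - u with hd
      have hd0 : 0 < d := by omega
      have hdeq : ((d:ℝ)) = (v:ℝ) - (u:ℝ) := by
        rw [hd, Nat.cast_sub huv.le]
      set z : ℤ := round ((d:ℝ) * α) with hz
      set θ : ℝ := (d:ℝ) * α - z with hθ
      have hθd : intDist ((d:ℝ) * α) = |θ| := rfl
      -- the distance is small
      have hδlt : |θ| < 1 / R := by
        rw [← hθd]
        have h5 : intDist ((d:ℝ) * α) ≤ |(d:ℝ) * α - ((⌊(v:ℝ) * α⌋ - ⌊(u:ℝ) * α⌋ : ℤ) : ℝ)| :=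
          intDist_le _ _
        refine lt_of_le_of_lt h5 ?_
        have h6 : (d:ℝ) * α - ((⌊(v:ℝ) * α⌋ - ⌊(u:ℝ) * α⌋ : ℤ) : ℝ)
            = Int.fract ((v:ℝ) * α) - Int.fract ((u:ℝ) * α) := by
          rw [Int.fract, Int.fract]
          push_cast [hdeq]
          ring
        rw [h6]
        exact hcl
      -- the distance is positive
      have hδ0 : 0 < |θ| := by
        rcases eq_or_ne θ 0 with h | h
        · exfalso
          have : (d:ℝ) * α = (z:ℝ) := by
            have := h
            rw [hθ] at this
            linarith
          have hirr : Irrational ((d:ℝ) * α) := by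
            have := hα.natCast_mul (Nat.pos_iff_ne_zero.mp hd0)
            exact this
          exact hirr.ne_int z this
        · exact abs_pos.mpr h
      have hδR : |θ| < 1 / (2 * (m K : ℝ)) := by
        have : ((R:ℕ):ℝ) = 2 * (m K : ℝ) := by push_cast [hR]; ring
        rwa [this] at hδlt
      have hmK0 : (0:ℝ) < (m K : ℝ) := by exact_mod_cast hpos K
      have hθpos : (0:ℝ) < |θ| := hδ0
      -- window at x = 1/(2|θ|)
      have hxK : (m K : ℝ) ≤ 1 / (2 * |θ|) := by
        rw [le_div_iff₀ (by positivity)]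
        have h7 : |θ| * (2 * (m K : ℝ)) < (1 / (2 * (m K : ℝ))) * (2 * (m K : ℝ)) :=
          mul_lt_mul_of_pos_right hδR (by positivity)
        rw [one_div_mul_cancel (by positivity)] at h7
        nlinarith
      obtain ⟨m₁, hm₁C, hm₁le, hm₁gt⟩ := window (1 / (2 * |θ|)) hxK
      have hm₁0 : (0:ℝ) < (m₁ : ℝ) := by
        by_contra hcon
        push_neg at hcon
        nlinarith [hm₁gt]
      have hm₁1 : 1 ≤ m₁ := by exact_mod_cast hm₁0
      -- 1/(2 lam) < m₁ * |θ| ≤ 1/2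
      have hhalf : (m₁ : ℝ) * |θ| ≤ 1 / 2 := by
        rw [le_div_iff₀ (by positivity : (0:ℝ) < 2 * |θ|)] at hm₁le
        nlinarith
      have hlow : 1 / (2 * lam) < (m₁ : ℝ) * |θ| := by
        rw [div_lt_iff₀ (by positivity : (0:ℝ) < 2 * |θ|)] at hm₁gt
        rw [div_lt_iff₀ (by positivity : (0:ℝ) < 2 * lam)]
        nlinarith
      -- intDist (m₁ * d * α) > 1/(2 lam)
      have hbig : 1 / (2 * lam) < intDist ((m₁ : ℝ) * ((d:ℝ) * α)) := by
        have heq : (m₁ : ℝ) * ((d:ℝ) * α) = (m₁ : ℝ) * θ + ((m₁ * z : ℤ) : ℝ) := by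
          push_cast [hθ]; ring
        rw [heq, intDist_add_int]
        unfold intDist
        set w : ℤ := round ((m₁:ℝ) * θ) with hw
        have habs : |(m₁:ℝ) * θ| = (m₁:ℝ) * |θ| := by
          rw [abs_mul, abs_of_pos hm₁0]
        rcases eq_or_ne w 0 with h | h
        · rw [h]
          simp only [Int.cast_zero, sub_zero]
          rw [habs]
          exact hlow
        · have h1 : (1:ℝ) ≤ |(w:ℝ)| := by
            have := Int.one_le_abs h
            exact_mod_cast this
          have h2 : |(m₁:ℝ) * θ - w| ≥ |(w:ℝ)| - |(m₁:ℝ) * θ| := by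
            have := abs_sub_abs_le_abs_sub ((w:ℝ)) ((m₁:ℝ) * θ)
            rw [abs_sub_comm] at this
            linarith
          have h3 : (m₁:ℝ) * |θ| ≤ 1/2 := hhalf
          rw [habs] at h2
          have hl : 1 / (2 * lam) < 1/2 := by
            rw [div_lt_div_iff₀ (by positivity) (by norm_num)]
            linarith
          linarith
      -- triangle inequality
      have htri : intDist ((m₁ : ℝ) * ((d:ℝ) * α)) ≤
          intDist (((m₁ * v : ℕ) : ℝ) * α) + intDist (((m₁ * u : ℕ) : ℝ) * α) := by
        have heq : (m₁ : ℝ) * ((d:ℝ) * α)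
            = ((m₁ * v : ℕ) : ℝ) * α - ((m₁ * u : ℕ) : ℝ) * α := by
          push_cast [hdeq]; ring
        rw [heq]
        exact intDist_sub_le _ _
      have hquarter : 1 / (4 * lam) < intDist (((m₁ * v : ℕ) : ℝ) * α) ∨
          1 / (4 * lam) < intDist (((m₁ * u : ℕ) : ℝ) * α) := by
        by_contra hcon
        push_neg at hcon
        have h1 := hcon.1
        have h2 := hcon.2
        have : 1 / (2 * lam) ≤ 1 / (4 * lam) + 1 / (4 * lam) := by linarith
        have heq2 : 1 / (4 * lam) + 1 / (4 * lam) = 1 / (2 * lam) := by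
          field_simp
          ring
        rw [heq2] at this
        linarith
      rcases hquarter with h | h
      · refine ⟨m₁ * v, ⟨⟨m₁, hm₁C, v, hvC, rfl⟩, h⟩, ?_⟩
        calc M < v := lt_trans hMu huv
        _ ≤ m₁ * v := Nat.le_mul_of_pos_left v (by omega)
      · refine ⟨m₁ * u, ⟨⟨m₁, hm₁C, u, huC, rfl⟩, h⟩, ?_⟩
        calc M < u := hMu
        _ ≤ m₁ * u := Nat.le_mul_of_pos_left u (by omega)
    -- apply main to a, b in the right order
    have haC : a ∈ C₂ := ha.1
    have hbC : b ∈ C₂ := hb.1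
    have hMa : M < a := by
      have := ha.2
      simp [Set.mem_Iic] at this
      omega
    have hMb : M < b := by
      have := hb.2
      simp [Set.mem_Iic] at this
      omega
    rcases hne.lt_or_gt with h | h
    · exact main a b haC hbC hMa h (by rw [abs_sub_comm]; exact hclose a b hfeq)
    · exact main b a hbC haC hMb h (by rw [abs_sub_comm]; exact hclose b a hfeq.symm)
  -- conclude infiniteness from unboundedness
  by_contra hfin
  rw [Set.not_infinite] at hfin
  obtain ⟨ub, hub⟩ := hfin.bddAbove
  obtain ⟨n, hnS, hn⟩ := key ub
  exact absurd (hub hnS) (by omega)
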